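/- Let c, d be positive integers, τ > 0, D ∈ M_c(ℂ) with Dᴴ D = I (D unitary), and Y ∈ M_{c×d}(ℂ). Define α̂ ∈ M_{c×d}(ℂ) by applying entrywise hard thresholding at level √(2τ) to Dᴴ Y, i.e. α̂(s,t) = (DᴴY)(s,t) if |(DᴴY)(s,t)| > √(2τ) and 0 otherwise. Then for every α ∈ M_{c×d}(ℂ): (1/2)·‖D·α̂ − Y‖_F² + τ·‖α̂‖₀ ≤ (1/2)·‖D·α − Y‖_F² + τ·‖α‖₀. -/

import Mathlib

open Matrix

/-- The isotropic `L⁰` pseudo-norm of a complex matrix: the number of its nonzero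
entries, as a real number. -/
noncomputable def isoL0 {c d : ℕ} (α : Matrix (Fin c) (Fin d) ℂ) : ℝ :=
  (Nat.card {p : Fin c × Fin d // α p.1 p.2 ≠ 0} : ℝ)

lemma point_min (τ : ℝ) (hτ : 0 < τ) (b a ahat : ℂ)
    (h : ahat = if Real.sqrt (2 * τ) < ‖b‖ then b else 0) :
    (1/2) * ‖ahat - b‖ ^ 2 + τ * (if ahat ≠ 0 then (1:ℝ) else 0) ≤
    (1/2) * ‖a - b‖ ^ 2 + τ * (if a ≠ 0 then (1:ℝ) else 0) := by
  have hsq : Real.sqrt (2 * τ) ^ 2 = 2 * τ := Real.sq_sqrt (by linarith)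
  have hnn : (0:ℝ) ≤ ‖a - b‖ ^ 2 := sq_nonneg _
  by_cases hb : Real.sqrt (2 * τ) < ‖b‖
  · have hb0 : b ≠ 0 := by
      intro h0
      rw [h0, norm_zero] at hb
      exact absurd hb (not_lt.mpr (Real.sqrt_nonneg _))
    rw [h, if_pos hb, if_pos hb0, sub_self, norm_zero]
    by_cases ha : a = 0
    · rw [if_neg (not_not_intro ha), ha, zero_sub, norm_neg, mul_zero, add_zero]
      have h2 : 2 * τ < ‖b‖ ^ 2 := by
        nlinarith [Real.sqrt_nonneg (2*τ), norm_nonneg b]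
      nlinarith
    · rw [if_pos ha]
      nlinarith
  · rw [h, if_neg hb]
    push_neg at hb
    have hb2 : ‖b‖ ^ 2 ≤ 2 * τ := by nlinarith [norm_nonneg b]
    rw [zero_sub, norm_neg, if_neg (not_not_intro rfl), mul_zero, add_zero]
    by_cases ha : a = 0
    · rw [if_neg (not_not_intro ha), ha, zero_sub, norm_neg, mul_zero, add_zero]
    · rw [if_pos ha, mul_one]
      nlinarith

lemma l0_sum {c d : ℕ} (β : Matrix (Fin c) (Fin d) ℂ) :
    isoL0 β = ∑ s : Fin c, ∑ t : Fin d, (if β s t ≠ 0 then (1:ℝ) else 0) := by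
  classical
  rw [isoL0, Nat.card_eq_fintype_card, Fintype.card_subtype, Finset.card_filter]
  push_cast
  rw [Fintype.sum_prod_type]

lemma sq_trace {c d : ℕ} (M : Matrix (Fin c) (Fin d) ℂ) :
    ∑ s : Fin c, ∑ t : Fin d, ‖M s t‖ ^ 2 = (Matrix.trace (Mᴴ * M)).re := by
  classical
  rw [Matrix.trace]
  simp only [Matrix.diag, Matrix.mul_apply, Matrix.conjTranspose_apply]
  rw [Complex.re_sum]
  rw [Finset.sum_comm]
  refine Finset.sum_congr rfl fun s _ => ?_
  rw [Complex.re_sum]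
  refine Finset.sum_congr rfl fun t _ => ?_
  rw [Complex.sq_norm, mul_comm, Complex.star_def, Complex.mul_conj, Complex.ofReal_re]

open Classical in
/-- Closed-form solution of the sparse-coding subproblem with a unitary dictionary:
entrywise hard thresholding of `Dᴴ Y` at level `√(2τ)` globally minimizes
`α ↦ (1/2)‖Dα − Y‖_F² + τ‖α‖₀`. -/
theorem sparse_coding_closed_form {c d : ℕ} (hc : 0 < c) (hd : 0 < d)
    (τ : ℝ) (hτ : 0 < τ)
    (D : Matrix (Fin c) (Fin c) ℂ) (hD : Dᴴ * D = 1)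
    (Y : Matrix (Fin c) (Fin d) ℂ) (αhat : Matrix (Fin c) (Fin d) ℂ)
    (hαhat : ∀ s t, αhat s t =
      if Real.sqrt (2 * τ) < ‖(Dᴴ * Y) s t‖ then (Dᴴ * Y) s t else 0) :
    ∀ α : Matrix (Fin c) (Fin d) ℂ,
      (1 / 2) * (∑ s : Fin c, ∑ t : Fin d, ‖(D * αhat) s t - Y s t‖ ^ 2)
          + τ * isoL0 αhat ≤
      (1 / 2) * (∑ s : Fin c, ∑ t : Fin d, ‖(D * α) s t - Y s t‖ ^ 2)
          + τ * isoL0 α := by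
  intro α
  have hD' : D * Dᴴ = 1 := mul_eq_one_comm.mp hD
  have inv : ∀ β : Matrix (Fin c) (Fin d) ℂ,
      ∑ s : Fin c, ∑ t : Fin d, ‖(D * β) s t - Y s t‖ ^ 2 =
      ∑ s : Fin c, ∑ t : Fin d, ‖β s t - (Dᴴ * Y) s t‖ ^ 2 := by
    intro β
    have h1 : D * β - Y = D * (β - Dᴴ * Y) := by
      rw [Matrix.mul_sub, ← Matrix.mul_assoc, hD', Matrix.one_mul]
    have h2 : ∀ s t, (D * β) s t - Y s t = (D * (β - Dᴴ * Y)) s t := by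
      intro s t; rw [← h1]; simp [Matrix.sub_apply]
    have h3 : ∀ s t, β s t - (Dᴴ * Y) s t = (β - Dᴴ * Y) s t := by
      intro s t; simp [Matrix.sub_apply]
    simp only [h2, h3]
    rw [sq_trace, sq_trace, Matrix.conjTranspose_mul, Matrix.mul_assoc,
      ← Matrix.mul_assoc Dᴴ, hD, Matrix.one_mul]
  rw [inv αhat, inv α, l0_sum, l0_sum]
  have key : ∀ (β : Matrix (Fin c) (Fin d) ℂ),
      (1/2) * (∑ s : Fin c, ∑ t : Fin d, ‖β s t - (Dᴴ * Y) s t‖ ^ 2)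
        + τ * (∑ s : Fin c, ∑ t : Fin d, (if β s t ≠ 0 then (1:ℝ) else 0)) =
      ∑ s : Fin c, ∑ t : Fin d,
        ((1/2) * ‖β s t - (Dᴴ * Y) s t‖ ^ 2
          + τ * (if β s t ≠ 0 then (1:ℝ) else 0)) := by
    intro β
    rw [Finset.mul_sum, Finset.mul_sum, ← Finset.sum_add_distrib]
    refine Finset.sum_congr rfl fun s _ => ?_
    rw [Finset.mul_sum, Finset.mul_sum, ← Finset.sum_add_distrib]
  rw [key, key]
  refine Finset.sum_le_sum fun s _ => Finset.sum_le_sum fun t _ => ?_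
  exact point_min τ hτ ((Dᴴ * Y) s t) (α s t) (αhat s t) (hαhat s t)
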